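/- Assume φ ∈ (0,1), ω > 0, μ > 0, b > 0 and r := bφ − μ(1−φ) > 0; set ρ* := (1 − e^{μ(1−φ)ω − bφω})/(1 − e^{−bφω}). Let A = (a_{ij}) be a real 3×3 matrix, let x ∈ ℝ³, and suppose u : ℝ → ℝ³ satisfies the Lotka–Volterra competition system at every t ∈ [0, (r/b)ω] with u(0) = x/ρ* (componentwise). Suppose v : [0, ω] → ℝ³ is continuous with v(0) = x, each component of v has derivative −μ·v_i(t) at every t ∈ (0, (1−φ)ω), and v satisfies the Lotka–Volterra competition system at every t ∈ ((1−φ)ω, ω). Then necessarily v(ω) = ρ*·u((r/b)ω). In particular, x is the initial value of an ω-periodic solution of the seasonal system (v(ω) = v(0) = x) if and only if ρ*·u((r/b)ω) = x, i.e., if and only if x/ρ* is either an equilibrium of the autonomous system or lies on a periodic orbit admitting (r/b)ω as a period. -/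

import Mathlib

set_option maxHeartbeats 1000000 in
/-- Uniqueness counterpart of the factorization of the seasonal Poincaré map:
any continuous `v` on `[0, ω]` with `v 0 = x` that solves the death phase on `(0, (1-φ)ω)`
and the Lotka–Volterra phase on `((1-φ)ω, ω)` must end at `v ω = ρ* • u((r/b)ω)`, where
`u` solves the autonomous system with `u 0 = x/ρ*`.  In particular `x` is a fixed point of
the Poincaré map (`v ω = v 0 = x`) iff `ρ* • u((r/b)ω) = x`. -/
theorem stmt_8 (φ ω μ b r ρs : ℝ)
    (hφ0 : 0 < φ) (hφ1 : φ < 1) (hω : 0 < ω) (hμ : 0 < μ) (hb : 0 < b)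
    (hr : r = b * φ - μ * (1 - φ)) (hrpos : 0 < r)
    (hρs : ρs = (1 - Real.exp (μ * (1 - φ) * ω - b * φ * ω)) /
      (1 - Real.exp (-(b * φ * ω))))
    (A : Matrix (Fin 3) (Fin 3) ℝ) (x : Fin 3 → ℝ) (u : ℝ → Fin 3 → ℝ)
    (hu : ∀ t ∈ Set.Icc (0 : ℝ) (r / b * ω), ∀ i : Fin 3,
      HasDerivAt (fun s => u s i) (u t i * (b - ∑ j : Fin 3, A i j * u t j)) t)
    (hu0 : ∀ i : Fin 3, u 0 i = x i / ρs)
    (v : ℝ → Fin 3 → ℝ)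
    (hvc : ContinuousOn v (Set.Icc 0 ω))
    (hv0 : ∀ i : Fin 3, v 0 i = x i)
    (hvdeath : ∀ t ∈ Set.Ioo (0 : ℝ) ((1 - φ) * ω), ∀ i : Fin 3,
      HasDerivAt (fun s => v s i) (-μ * v t i) t)
    (hvLV : ∀ t ∈ Set.Ioo ((1 - φ) * ω) ω, ∀ i : Fin 3,
      HasDerivAt (fun s => v s i) (v t i * (b - ∑ j : Fin 3, A i j * v t j)) t) :
    (∀ i : Fin 3, v ω i = ρs * u (r / b * ω) i) ∧
      ((∀ i : Fin 3, v ω i = x i) ↔ (∀ i : Fin 3, ρs * u (r / b * ω) i = x i)) := by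
  have main : ∀ i : Fin 3, v ω i = ρs * u (r / b * ω) i := by
    set a : ℝ := (1 - φ) * ω with ha_def
    have ha0 : 0 < a := by rw [ha_def]; nlinarith
    have haω : a < ω := by rw [ha_def]; nlinarith
    set Lc : ℝ := Real.exp (-(μ * (1 - φ) * ω)) with hLc_def
    set Ec : ℝ := Real.exp (-(b * φ * ω)) with hEc_def
    have hrω : μ * (1 - φ) * ω < b * φ * ω := by nlinarith
    have hEpos : 0 < Ec := Real.exp_pos _
    have hLpos : 0 < Lc := Real.exp_pos _
    have hEltL : Ec < Lc := Real.exp_lt_exp.mpr (by linarith)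
    have hL1 : Lc < 1 := Real.exp_lt_one_iff.mpr (by nlinarith)
    have hE1 : Ec < 1 := by linarith
    have hρspos : 0 < ρs := by
      rw [hρs]
      apply div_pos
      · have := Real.exp_lt_one_iff.mpr (show μ * (1 - φ) * ω - b * φ * ω < 0 by linarith)
        linarith
      · linarith
    set ρ0 : ℝ := Lc * ρs with hρ0_def
    have hkey : Lc * Real.exp (μ * (1 - φ) * ω - b * φ * ω) = Ec := by
      rw [hLc_def, hEc_def, ← Real.exp_add]; congr 1; ring
    have hρ0eq : ρ0 = (Lc - Ec) / (1 - Ec) := by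
      rw [hρ0_def, hρs, ← mul_div_assoc]
      congr 1
      rw [mul_sub, mul_one, hkey]
    have hρ0pos : 0 < ρ0 := by rw [hρ0eq]; apply div_pos <;> linarith
    have hρ0lt1 : ρ0 < 1 := by
      rw [hρ0eq, div_lt_one (by linarith)]; linarith
    set D : ℝ → ℝ := fun t => 1 - ρ0 + ρ0 * Real.exp (b * (t - a)) with hD_def
    have hDpos : ∀ t, 0 < D t := by
      intro t
      have := Real.exp_pos (b * (t - a))
      rw [hD_def]; dsimp only; nlinarith
    set ρf : ℝ → ℝ := fun t => ρ0 * Real.exp (b * (t - a)) / D t with hρf_def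
    set τf : ℝ → ℝ := fun t => Real.log (D t) / b with hτf_def
    have hρfpos : ∀ t, 0 < ρf t := fun t => by
      rw [hρf_def]; exact div_pos (by positivity) (hDpos t)
    have hE' : ∀ t : ℝ, HasDerivAt (fun s => Real.exp (b * (s - a)))
        (b * Real.exp (b * (t - a))) t := by
      intro t
      have h1 : HasDerivAt (fun s : ℝ => b * (s - a)) b t := by
        simpa using ((hasDerivAt_id t).sub_const a).const_mul b
      simpa [mul_comm] using h1.exp
    have hD' : ∀ t : ℝ, HasDerivAt D (ρ0 * (b * Real.exp (b * (t - a)))) t := by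
      intro t
      exact ((hE' t).const_mul ρ0).const_add (1 - ρ0)
    have hτ' : ∀ t : ℝ, HasDerivAt τf (ρf t) t := by
      intro t
      have := ((Real.hasDerivAt_log (hDpos t).ne').comp t (hD' t)).div_const b
      refine this.congr_deriv ?_
      symm
      rw [hρf_def]
      dsimp only
      field_simp [(hDpos t).ne', hb.ne']
    have hρ' : ∀ t : ℝ, HasDerivAt ρf (b * ρf t * (1 - ρf t)) t := by
      intro t
      have hnum : HasDerivAt (fun s => ρ0 * Real.exp (b * (s - a)))
          (ρ0 * (b * Real.exp (b * (t - a)))) t := (hE' t).const_mul ρ0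
      have := hnum.div (hD' t) (hDpos t).ne'
      refine this.congr_deriv ?_
      symm
      rw [hρf_def]
      dsimp only
      field_simp [(hDpos t).ne']
    have hDa : D a = 1 := by rw [hD_def]; simp
    have hρfa : ρf a = ρ0 := by rw [hρf_def]; dsimp only; rw [hDa]; simp
    have hτfa : τf a = 0 := by rw [hτf_def]; dsimp only; rw [hDa]; simp
    have hωa : b * (ω - a) = b * φ * ω := by rw [ha_def]; ring
    have h1E : Real.exp (b * (ω - a)) = Ec⁻¹ := by
      rw [hωa, hEc_def, ← Real.exp_neg, neg_neg]
    have hE1ne : (1 : ℝ) - Ec ≠ 0 := by linarith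
    have hDω : D ω = Lc / Ec := by
      rw [hD_def]
      dsimp only
      rw [hρ0eq, h1E]
      field_simp
      ring
    have hτfω : τf ω = r / b * ω := by
      rw [hτf_def]
      dsimp only
      rw [hDω, Real.log_div hLpos.ne' hEpos.ne', hLc_def, hEc_def,
        Real.log_exp, Real.log_exp, hr]
      field_simp
      ring
    have hρfω : ρf ω = ρs := by
      rw [hρf_def]
      dsimp only
      rw [hDω, h1E, hρ0_def]
      field_simp
    -- τf maps [a, ω] into [0, r/b*ω]
    have hDmono : ∀ s t : ℝ, s ≤ t → D s ≤ D t := by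
      intro s t hst
      rw [hD_def]
      dsimp only
      have : Real.exp (b * (s - a)) ≤ Real.exp (b * (t - a)) :=
        Real.exp_le_exp.mpr (by nlinarith)
      nlinarith
    have hτmono : ∀ s t : ℝ, s ≤ t → τf s ≤ τf t := by
      intro s t hst
      rw [hτf_def]
      dsimp only
      have hlog : Real.log (D s) ≤ Real.log (D t) :=
        (Real.log_le_log_iff (hDpos s) (hDpos t)).mpr (hDmono s t hst)
      have := mul_le_mul_of_nonneg_right hlog (by positivity : (0:ℝ) ≤ b⁻¹)
      simpa [div_eq_mul_inv] using this
    have hτmem : ∀ t ∈ Set.Icc a ω, τf t ∈ Set.Icc (0:ℝ) (r / b * ω) := by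
      intro t ht
      constructor
      · rw [← hτfa]; exact hτmono a t ht.1
      · rw [← hτfω]; exact hτmono t ω ht.2
    -- the explicit LV-phase solution w
    set w : ℝ → Fin 3 → ℝ := fun t i => ρf t * u (τf t) i with hw_def
    have hw' : ∀ t ∈ Set.Icc a ω, ∀ i : Fin 3,
        HasDerivAt (fun s => w s i) (w t i * (b - ∑ j : Fin 3, A i j * w t j)) t := by
      intro t ht i
      have hut := hu (τf t) (hτmem t ht) i
      have hcomp : HasDerivAt (fun s => u (τf s) i)
          ((u (τf t) i * (b - ∑ j : Fin 3, A i j * u (τf t) j)) * ρf t) t := by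
        exact HasDerivAt.comp t hut (hτ' t)
      have hprod := (hρ' t).mul hcomp
      rw [hw_def]
      dsimp only
      refine hprod.congr_deriv ?_
      symm
      have hsum : ∑ j : Fin 3, A i j * (ρf t * u (τf t) j)
          = ρf t * ∑ j : Fin 3, A i j * u (τf t) j := by
        rw [Finset.mul_sum]
        exact Finset.sum_congr rfl fun j _ => by ring
      rw [hsum]
      ring
    have hwa : ∀ i : Fin 3, w a i = Lc * x i := by
      intro i
      rw [hw_def]
      dsimp only
      rw [hρfa, hτfa, hu0 i, hρ0_def]
      field_simp
    -- death phase: v a i = Lc * x i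
    have hva : ∀ i : Fin 3, v a i = Lc * x i := by
      intro i
      set g : ℝ → ℝ := fun t => v t i * Real.exp (μ * t) with hg_def
      have hgc : ContinuousOn g (Set.Icc 0 a) := by
        apply ContinuousOn.mul
        · exact ((continuous_apply i).comp_continuousOn
            (hvc.mono (Set.Icc_subset_Icc le_rfl haω.le)))
        · exact (Real.continuous_exp.comp (continuous_const.mul continuous_id)).continuousOn
      have hg' : ∀ t ∈ Set.Ioo (0:ℝ) a, HasDerivAt g 0 t := by
        intro t ht
        have h1 := hvdeath t ht i
        have h2 : HasDerivAt (fun s => Real.exp (μ * s)) (μ * Real.exp (μ * t)) t := by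
          have : HasDerivAt (fun s : ℝ => μ * s) μ t := by
            simpa using (hasDerivAt_id t).const_mul μ
          simpa [mul_comm] using this.exp
        have := h1.mul h2
        rw [hg_def]
        refine this.congr_deriv ?_
        ring
      have hdiff : DifferentiableOn ℝ g (interior (Set.Icc (0:ℝ) a)) := by
        rw [interior_Icc]
        exact fun t ht => ((hg' t ht).differentiableAt).differentiableWithinAt
      have hderiv0 : ∀ t ∈ interior (Set.Icc (0:ℝ) a), deriv g t = 0 := by
        rw [interior_Icc]
        exact fun t ht => (hg' t ht).deriv
      have hmono := monotoneOn_of_deriv_nonneg (convex_Icc 0 a) hgc hdiff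
        (fun t ht => le_of_eq (hderiv0 t ht).symm)
      have hanti := antitoneOn_of_deriv_nonpos (convex_Icc 0 a) hgc hdiff
        (fun t ht => le_of_eq (hderiv0 t ht))
      have hga : g a = g 0 := le_antisymm
        (hanti (Set.left_mem_Icc.mpr ha0.le) (Set.right_mem_Icc.mpr ha0.le) ha0.le)
        (hmono (Set.left_mem_Icc.mpr ha0.le) (Set.right_mem_Icc.mpr ha0.le) ha0.le)
      have hg0 : g 0 = x i := by rw [hg_def]; simp [hv0 i]
      have hgaval : v a i * Real.exp (μ * a) = x i := by
        rw [← hg0, ← hga, hg_def]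
      have hμa : Lc * Real.exp (μ * a) = 1 := by
        rw [hLc_def, ← Real.exp_add, ha_def]
        norm_num
        congr 1
        ring
      have hstep : Lc * (v a i * Real.exp (μ * a)) = v a i := by
        rw [show Lc * (v a i * Real.exp (μ * a))
            = Lc * Real.exp (μ * a) * v a i from by ring, hμa, one_mul]
      calc v a i = Lc * (v a i * Real.exp (μ * a)) := hstep.symm
        _ = Lc * x i := by rw [hgaval]
    -- Grönwall uniqueness on [a', ω] for a' → a⁺
    -- the (autonomous) right-hand side
    set F : (Fin 3 → ℝ) → Fin 3 → ℝ :=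
      fun y i => y i * (b - ∑ j : Fin 3, A i j * y j) with hF_def
    have hFcd : ContDiff ℝ 1 F := by
      rw [hF_def]
      apply contDiff_pi.mpr
      intro i
      apply ContDiff.mul
      · exact (ContinuousLinearMap.proj i : (Fin 3 → ℝ) →L[ℝ] ℝ).contDiff
      · apply ContDiff.sub contDiff_const
        apply ContDiff.sum
        intro j _
        exact contDiff_const.mul (ContinuousLinearMap.proj j :
          (Fin 3 → ℝ) →L[ℝ] ℝ).contDiff
    have hwc : ContinuousOn w (Set.Icc a ω) := by
      intro t ht
      apply ContinuousAt.continuousWithinAt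
      apply continuousAt_pi.mpr
      intro i
      exact (hw' t ht i).continuousAt
    have hvc' : ContinuousOn v (Set.Icc a ω) :=
      hvc.mono (Set.Icc_subset_Icc ha0.le le_rfl)
    obtain ⟨R1, hR1⟩ := isCompact_Icc.exists_bound_of_continuousOn hvc'
    obtain ⟨R2, hR2⟩ := isCompact_Icc.exists_bound_of_continuousOn hwc
    set R : ℝ := max R1 R2 with hR_def
    have hmemv : ∀ t ∈ Set.Icc a ω, v t ∈ Metric.closedBall (0 : Fin 3 → ℝ) R := by
      intro t ht
      rw [mem_closedBall_zero_iff]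
      exact (hR1 t ht).trans (le_max_left _ _)
    have hmemw : ∀ t ∈ Set.Icc a ω, w t ∈ Metric.closedBall (0 : Fin 3 → ℝ) R := by
      intro t ht
      rw [mem_closedBall_zero_iff]
      exact (hR2 t ht).trans (le_max_right _ _)
    -- Lipschitz constant for F on the ball
    obtain ⟨C, hC⟩ := (isCompact_closedBall (0 : Fin 3 → ℝ) R).exists_bound_of_continuousOn
      ((hFcd.continuous_fderiv one_ne_zero).continuousOn)
    set K : NNReal := C.toNNReal with hK_def
    have hFlip : LipschitzOnWith K F (Metric.closedBall (0 : Fin 3 → ℝ) R) := by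
      apply (convex_closedBall _ _).lipschitzOnWith_of_nnnorm_hasFDerivWithin_le
        (f' := fun y => fderiv ℝ F y)
      · intro y hy
        exact ((hFcd.differentiable one_ne_zero) y).hasFDerivAt.hasFDerivWithinAt
      · intro y hy
        rw [← NNReal.coe_le_coe, coe_nnnorm, hK_def, Real.coe_toNNReal']
        exact (hC y hy).trans (le_max_left _ _)
    -- Grönwall estimate on [a', ω]
    have hgron : ∀ a' ∈ Set.Ioo a ω,
        dist (v ω) (w ω) ≤ dist (v a') (w a') * Real.exp (K * ω) := by
      intro a' ha'
      have hKω : Real.exp ((K : ℝ) * (ω - a')) ≤ Real.exp ((K : ℝ) * ω) := by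
        apply Real.exp_le_exp.mpr
        have h0a' : 0 < a' := lt_trans ha0 ha'.1
        nlinarith [NNReal.coe_nonneg K]
      have hsub : Set.Icc a' ω ⊆ Set.Icc a ω := Set.Icc_subset_Icc ha'.1.le le_rfl
      have hico : Set.Ico a' ω ⊆ Set.Ioo a ω := fun t ht => ⟨lt_of_lt_of_le ha'.1 ht.1, ht.2⟩
      have key := dist_le_of_trajectories_ODE_of_mem
        (v := fun _ y => F y) (s := fun _ => Metric.closedBall (0 : Fin 3 → ℝ) R)
        (K := K) (f := v) (g := w) (a := a') (b := ω)
        (fun _ _ => hFlip)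
        (hvc'.mono hsub)
        (fun t ht => by
          have hD := (hasDerivAt_pi.mpr (fun i => hvLV t (hico ht) i))
          exact hD.hasDerivWithinAt)
        (fun t ht => hmemv t (hsub (Set.Ico_subset_Icc_self ht)))
        (hwc.mono hsub)
        (fun t ht => by
          have hD := (hasDerivAt_pi.mpr
            (fun i => hw' t (hsub (Set.Ico_subset_Icc_self ht)) i))
          exact hD.hasDerivWithinAt)
        (fun t ht => hmemw t (hsub (Set.Ico_subset_Icc_self ht)))
        (le_refl (dist (v a') (w a')))
        ω (Set.right_mem_Icc.mpr ha'.2.le)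
      calc dist (v ω) (w ω) ≤ dist (v a') (w a') * Real.exp (K * (ω - a')) := key
        _ ≤ dist (v a') (w a') * Real.exp ((K : ℝ) * ω) := by
            exact mul_le_mul_of_nonneg_left hKω dist_nonneg
    -- take a' → a⁺
    have hvw_a : v a = w a := by
      funext i
      rw [hva i, hwa i]
    have htendsto : Filter.Tendsto (fun a' => dist (v a') (w a') * Real.exp (K * ω))
        (nhdsWithin a (Set.Ioi a)) (nhds 0) := by
      have hv_tendsto : Filter.Tendsto v (nhdsWithin a (Set.Ioi a)) (nhds (v a)) := by
        have := (hvc'.continuousWithinAt (Set.left_mem_Icc.mpr haω.le)).mono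
          (Set.Ioo_subset_Icc_self (a := a) (b := ω))
        rwa [ContinuousWithinAt, nhdsWithin_Ioo_eq_nhdsGT haω] at this
      have hw_tendsto : Filter.Tendsto w (nhdsWithin a (Set.Ioi a)) (nhds (w a)) := by
        have : ContinuousAt w a := by
          apply continuousAt_pi.mpr
          intro i
          exact (hw' a (Set.left_mem_Icc.mpr haω.le) i).continuousAt
        exact this.tendsto.mono_left nhdsWithin_le_nhds
      have hdist : Filter.Tendsto (fun a' => dist (v a') (w a'))
          (nhdsWithin a (Set.Ioi a)) (nhds 0) := by
        have := hv_tendsto.dist hw_tendsto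
        rwa [hvw_a, dist_self] at this
      simpa using hdist.mul_const (Real.exp (K * ω))
    have hfinal : dist (v ω) (w ω) ≤ 0 := by
      apply ge_of_tendsto htendsto
      filter_upwards [Ioo_mem_nhdsGT_of_mem (Set.mem_Ico.mpr ⟨le_refl a, haω⟩)] with a' ha'
      exact hgron a' ha'
    have hvw : v ω = w ω := by
      rw [← dist_le_zero]
      exact hfinal
    intro i
    rw [hvw]
    rw [hw_def]
    dsimp only
    rw [hρfω, hτfω]
  refine ⟨main, ?_⟩
  constructor
  · intro h i; rw [← main i]; exact h i
  · intro h i; rw [main i]; exact h i
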